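/- arXiv:2211.08869 — 5 statements merged into one kernel-verified Lean document; each statement's English description precedes it below -/
import Mathlib

section
/- Let G be a group and let W, X, Y be three pairwise distinct proper subgroups of G such that X and W ∩ X are normal in G, X and Y are maximal subgroups of G, and W ∩ X is not contained in Y. Then X ∩ Y is not contained in W. -/
open Subgroup

namespace NC

variable {G : Type*} [Group G]

/-- The centre of a subgroup `H`, realised as a subgroup of the ambient group `G`. -/
def centerOf (H : Subgroup G) : Subgroup G := H ⊓ Subgroup.centralizer (H : Set G)

/-- `H` is a maximal subgroup of `K` (both subgroups of the ambient group `G`). -/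
def IsMaximalIn (H K : Subgroup G) : Prop :=
  H < K ∧ ∀ T : Subgroup G, H < T → T ≤ K → T = K

/-- The non-commuting, non-generating graph of `G`: vertices `x, y` are adjacent
iff they do not commute and do not generate `G`.  (Central elements are isolated
vertices here; the paper simply removes them from the vertex set.) -/
def ncGraph (G : Type*) [Group G] : SimpleGraph G where
  Adj x y := x * y ≠ y * x ∧ Subgroup.closure {x, y} ≠ ⊤
  symm := by
    constructor
    intro x y h
    exact ⟨fun e => h.1 e.symm, by rw [Set.pair_comm]; exact h.2⟩
  loopless := by
    constructor
    intro x h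
    exact h.1 rfl

/-- The conjugate `g H g⁻¹` of a subgroup `H` by an element `g`. -/
def conjSub (g : G) (H : Subgroup G) : Subgroup G := H.map (MulAut.conj g).toMonoidHom

/-- "The quotient of `G` by the subgroup `H` is cyclic": every coset of `H` is a
power of a fixed coset.  For `H` normal this says exactly that `G/H` is cyclic. -/
def QuotCyclic (H : Subgroup G) : Prop := ∃ g : G, ∀ x : G, ∃ n : ℤ, x⁻¹ * g ^ n ∈ H

/-- `P` is a Sylow `p`-subgroup of `G`. -/
def IsSylowIn (p : ℕ) (P : Subgroup G) : Prop :=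
  IsPGroup p P ∧ ∀ R : Subgroup G, IsPGroup p R → P ≤ R → R = P

/-- The Frattini subgroup of a subgroup `P` (the intersection of the maximal
subgroups of `P`), realised as a subgroup of the ambient group. -/
def phiIn (P : Subgroup G) : Subgroup G := P ⊓ sInf {W : Subgroup G | IsMaximalIn W P}

/-- `G` has exactly two conjugacy classes of maximal subgroups. -/
def TwoMaxClasses (G : Type*) [Group G] : Prop :=
  ∃ K L : Subgroup G, IsCoatom K ∧ IsCoatom L ∧ (∀ g : G, conjSub g K ≠ L) ∧
    ∀ T : Subgroup G, IsCoatom T → (∃ g : G, T = conjSub g K) ∨ (∃ g : G, T = conjSub g L)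

/-- The induced subgraph of the non-commuting, non-generating graph on the
actual vertex set `G \ Z(G)`. -/
def ncSubgraph (G : Type*) [Group G] := (ncGraph G).induce {x : G | x ∉ Subgroup.center G}

/-- Lemma 2.4 / `lem:threemaxint`. -/
theorem statement_2 {W X Y : Subgroup G}
    (hWprop : W ≠ ⊤) (hWX : W ≠ X) (hWY : W ≠ Y) (hXY : X ≠ Y)
    (hXn : X.Normal) (hWXn : (W ⊓ X).Normal)
    (hX : IsCoatom X) (hY : IsCoatom Y)
    (h : ¬ W ⊓ X ≤ Y) : ¬ X ⊓ Y ≤ W := by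
  intro hle
  have hsup : (W ⊓ X) ⊔ Y = ⊤ := by
    rcases lt_or_eq_of_le (le_sup_right : Y ≤ (W ⊓ X) ⊔ Y) with hlt | heq
    · exact hY.2 _ hlt
    · exact absurd (le_sup_left.trans heq.ge) h
  have hXW : X ≤ W := by
    intro x hx
    have hxtop : x ∈ (W ⊓ X) ⊔ Y := by rw [hsup]; trivial
    have := hWXn
    rw [← SetLike.mem_coe, Subgroup.normal_mul] at hxtop
    obtain ⟨n, hn, y, hy, rfl⟩ := hxtop
    have hyX : y ∈ X := by
      have : n⁻¹ * (n * y) ∈ X := mul_mem (inv_mem hn.2) hx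
      simpa using this
    exact mul_mem hn.1 (hle ⟨hyX, hy⟩)
  rcases lt_or_eq_of_le hXW with hlt | heq
  · exact hWprop (hX.2 _ hlt)
  · exact hWX heq.symm

end NC
end

section
/- Let G be a group, N a normal subgroup of G such that the quotient G/N is not cyclic, and let n ∈ N \ Z(G) and g ∈ G \ Z(G) with n ≠ g. Then n and g are adjacent in the non-commuting, non-generating graph nc(G) if and only if [n,g] ≠ 1. -/
open Subgroup
open scoped commutatorElement

namespace NC

variable {G : Type*} [Group G]

/-- Lemma 2.8 / `lem:noncycedge`. -/
theorem statement_4 {N : Subgroup G} [hN : N.Normal]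
    (hcyc : ¬ IsCyclic (G ⧸ N)) {n g : G} (hn : n ∈ N)
    (hnZ : n ∉ Subgroup.center G) (hgZ : g ∉ Subgroup.center G) (hng : n ≠ g) :
    (ncGraph G).Adj n g ↔ ⁅n, g⁆ ≠ 1 := by
  have key : Subgroup.closure {n, g} ≠ ⊤ := by
    intro htop
    apply hcyc
    set f := QuotientGroup.mk' N with hf
    have hfn : f n = 1 := (QuotientGroup.eq_one_iff n).mpr hn
    have hmap : Subgroup.map f ⊤ = ⊤ :=
      Subgroup.map_top_of_surjective f (QuotientGroup.mk'_surjective N)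
    rw [← htop, MonoidHom.map_closure] at hmap
    have himg : f '' {n, g} = {1, f g} := by
      rw [Set.image_pair, hfn]
    rw [himg] at hmap
    refine ⟨⟨f g, fun x => ?_⟩⟩
    have hx : x ∈ Subgroup.closure {1, f g} := by rw [hmap]; trivial
    have hle : Subgroup.closure {1, f g} ≤ Subgroup.zpowers (f g) := by
      rw [Subgroup.closure_le]
      rintro y (rfl | rfl)
      · exact one_mem _
      · exact Subgroup.mem_zpowers _
    exact hle hx
  constructor
  · intro h
    rw [Ne, commutatorElement_eq_one_iff_mul_comm]
    exact h.1
  · intro h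
    rw [Ne, commutatorElement_eq_one_iff_mul_comm] at h
    exact ⟨h, key⟩

end NC
end

section
/- Let G be a 2-generated group and let L and M be non-abelian maximal subgroups of G with L normal in G. Let x ∈ L \ Z(L) and y ∈ M \ Z(M), and suppose that C_L(x) is normal in G or M is normal in G. Then the distance d(x,y) between x and y in the non-commuting, non-generating graph nc(G) is at most 3. Moreover, d(x,y) = 3 if and only if either: (i) x ∈ Z(M), y ∉ L, and M is the only maximal subgroup of G that contains y and does not centralise y; or (ii) y ∈ Z(L), x ∉ M, and L is the only maximal subgroup of G that contains x and does not centralise x. -/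
open Subgroup

namespace NC

variable {G : Type*} [Group G]

lemma mem_cz {t g : G} : g ∈ Subgroup.centralizer {t} ↔ t * g = g * t := by
  rw [Subgroup.mem_centralizer_iff]
  constructor
  · intro h; exact h t rfl
  · intro h h' hh'
    rw [Set.mem_singleton_iff] at hh'
    subst hh'
    exact h

lemma pair_le {u v : G} {K : Subgroup G} (hu : u ∈ K) (hv : v ∈ K) :
    Subgroup.closure {u, v} ≤ K := by
  rw [Subgroup.closure_le]
  intro g hg
  rcases hg with rfl | hg
  · exact hu
  · rw [Set.mem_singleton_iff] at hg; exact hg ▸ hv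

lemma adj_mk {u v : G} {K : Subgroup G} (hK : K ≠ ⊤) (hu : u ∈ K) (hv : v ∈ K)
    (h : u * v ≠ v * u) : (ncGraph G).Adj u v := by
  refine ⟨h, fun ht => hK ?_⟩
  exact top_le_iff.mp (ht ▸ pair_le hu hv)

lemma cover {H A B : Subgroup G} (hA : ¬ H ≤ A) (hB : ¬ H ≤ B) :
    ∃ g ∈ H, g ∉ A ∧ g ∉ B := by
  by_contra hc
  push_neg at hc
  obtain ⟨u, huH, huA⟩ := SetLike.not_le_iff_exists.mp hA
  obtain ⟨v, hvH, hvB⟩ := SetLike.not_le_iff_exists.mp hB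
  have huB : u ∈ B := hc u huH huA
  have hvA : v ∈ A := by
    by_contra hvA
    exact hvB (hc v hvH hvA)
  by_cases huv : u * v ∈ A
  · exact huA (by simpa using A.mul_mem huv (A.inv_mem hvA))
  · exact hvB (by simpa using B.mul_mem (B.inv_mem huB) (hc (u * v) (H.mul_mem huH hvH) huv))

lemma exists_coatom (h2 : ∃ a b : G, Subgroup.closure {a, b} = ⊤)
    {H : Subgroup G} (hH : H ≠ ⊤) : ∃ K : Subgroup G, IsCoatom K ∧ H ≤ K := by
  obtain ⟨a, b, hab⟩ := h2
  set s : Set (Subgroup G) := {K | H ≤ K ∧ K ≠ ⊤} with hs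
  have hzorn := zorn_le_nonempty₀ s ?_ H ⟨le_rfl, hH⟩
  · obtain ⟨m, hHm, hmax⟩ := hzorn
    refine ⟨m, ⟨hmax.1.2, fun z hz => ?_⟩, hHm⟩
    by_contra hzt
    exact absurd (hmax.2 ⟨hHm.trans hz.le, hzt⟩ hz.le) (not_le_of_gt hz)
  · intro c hcs hchain w hw
    refine ⟨sSup c, ⟨(hcs hw).1.trans (le_sSup hw), fun htop => ?_⟩, fun z hz => le_sSup hz⟩
    have hd : DirectedOn (· ≤ ·) c := IsChain.directedOn hchain
    have ha : a ∈ sSup c := htop ▸ Subgroup.mem_top a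
    have hb : b ∈ sSup c := htop ▸ Subgroup.mem_top b
    rw [Subgroup.mem_sSup_of_directedOn ⟨w, hw⟩ hd] at ha hb
    obtain ⟨K₁, hK₁c, haK⟩ := ha
    obtain ⟨K₂, hK₂c, hbK⟩ := hb
    rcases hd K₁ hK₁c K₂ hK₂c with ⟨K₃, hK₃c, h13, h23⟩
    have : K₃ = ⊤ := top_le_iff.mp (hab ▸ pair_le (h13 haK) (h23 hbK))
    exact (hcs hK₃c).2 this

lemma sup_zpowers_decomp {N : Subgroup G} (hN : N.Normal) {u : G}
    (h : N ⊔ Subgroup.zpowers u = ⊤) (g : G) : ∃ n ∈ N, ∃ k : ℤ, g = n * u ^ k := by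
  haveI := hN
  have hg : g ∈ ((N ⊔ Subgroup.zpowers u : Subgroup G) : Set G) := by
    rw [h]; trivial
  rw [Subgroup.normal_mul] at hg
  obtain ⟨n, hn, c, hc, hnc⟩ := hg
  obtain ⟨k, hk⟩ := Subgroup.mem_zpowers_iff.mp hc
  exact ⟨n, hn, k, by rw [hk]; exact hnc.symm⟩

lemma coatom_sup {L : Subgroup G} (hL : IsCoatom L) {u : G} (hu : u ∉ L) :
    L ⊔ Subgroup.zpowers u = ⊤ := by
  apply hL.2
  refine lt_of_le_of_ne le_sup_left (fun he => hu ?_)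
  have : u ∈ L ⊔ Subgroup.zpowers u :=
    (le_sup_right : Subgroup.zpowers u ≤ L ⊔ Subgroup.zpowers u) (Subgroup.mem_zpowers u)
  rwa [← he] at this

lemma coatom_decomp {L : Subgroup G} (hLn : L.Normal) (hL : IsCoatom L) {u : G}
    (hu : u ∉ L) (g : G) : ∃ l ∈ L, ∃ k : ℤ, g = l * u ^ k :=
  sup_zpowers_decomp hLn (coatom_sup hL hu) g

lemma centerOf_normal {L : Subgroup G} (hLn : L.Normal) : (centerOf L).Normal := by
  constructor
  intro z hz g
  obtain ⟨hzL, hzC⟩ := Subgroup.mem_inf.mp hz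
  refine Subgroup.mem_inf.mpr ⟨hLn.conj_mem z hzL g, ?_⟩
  rw [Subgroup.mem_centralizer_iff]
  intro l hl
  have hl' : g⁻¹ * l * g ∈ L := by
    have := hLn.conj_mem l hl g⁻¹
    simpa using this
  have hc := hzC (g⁻¹ * l * g) hl'
  -- hc : (g⁻¹ * l * g) * z = z * (g⁻¹ * l * g)
  have : l * (g * z * g⁻¹) = g * ((g⁻¹ * l * g) * z) * g⁻¹ := by group
  rw [this, hc]
  group


lemma coatom_eq_of_le {K L : Subgroup G} (hK : IsCoatom K) (hL : IsCoatom L)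
    (h : K ≤ L) : K = L := by
  by_contra hne
  exact hL.1 (hK.2 L (lt_of_le_of_ne h hne))

lemma centralizer_eq {M : Subgroup G} (hM : IsCoatom M) {t : G}
    (hle : M ≤ Subgroup.centralizer {t}) (hne : Subgroup.centralizer {t} ≠ ⊤) :
    Subgroup.centralizer {t} = M := by
  by_contra h
  exact hne (hM.2 _ (lt_of_le_of_ne hle (Ne.symm h)))

lemma center_sup_ne_top {L : Subgroup G} (hLn : L.Normal)
    (hLna : ∃ a ∈ L, ∃ b ∈ L, a * b ≠ b * a) (w : G) :
    centerOf L ⊔ Subgroup.zpowers w ≠ ⊤ := by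
  intro h
  obtain ⟨a, haL, b, hbL, hab⟩ := hLna
  have hZn := centerOf_normal hLn
  obtain ⟨z₁, hz₁, k₁, ha⟩ := sup_zpowers_decomp hZn h a
  obtain ⟨z₂, hz₂, k₂, hb⟩ := sup_zpowers_decomp hZn h b
  obtain ⟨hz₁L, hz₁C⟩ := Subgroup.mem_inf.mp hz₁
  obtain ⟨hz₂L, hz₂C⟩ := Subgroup.mem_inf.mp hz₂
  have hw₁ : (w : G) ^ k₁ ∈ L := by
    have : (w : G) ^ k₁ = z₁⁻¹ * a := by rw [ha]; group
    rw [this]; exact L.mul_mem (L.inv_mem hz₁L) haL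
  have hw₂ : (w : G) ^ k₂ ∈ L := by
    have : (w : G) ^ k₂ = z₂⁻¹ * b := by rw [hb]; group
    rw [this]; exact L.mul_mem (L.inv_mem hz₂L) hbL
  apply hab
  have c11 : Commute z₁ z₂ := (hz₁C z₂ hz₂L).symm
  have c12 : Commute z₁ ((w : G) ^ k₂) := (hz₁C _ hw₂).symm
  have c21 : Commute ((w : G) ^ k₁) z₂ := hz₂C _ hw₁
  have c22 : Commute ((w : G) ^ k₁) ((w : G) ^ k₂) := by
    unfold Commute SemiconjBy
    rw [← zpow_add, ← zpow_add, add_comm]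
  have : Commute a b := by
    rw [ha, hb]
    exact (c11.mul_right c12).mul_left (c21.mul_right c22)
  exact this

lemma comm_mem_of_sup_zpowers {D : Subgroup G} (hD : D.Normal) {u : G}
    (h : D ⊔ Subgroup.zpowers u = ⊤) (g h' : G) : g * h' * g⁻¹ * h'⁻¹ ∈ D := by
  haveI := hD
  obtain ⟨d₁, hd₁, i, hg⟩ := sup_zpowers_decomp hD h g
  obtain ⟨d₂, hd₂, j, hh⟩ := sup_zpowers_decomp hD h h'
  set π : G →* G ⧸ D := QuotientGroup.mk' D with hπ
  have h1 : π d₁ = 1 := (QuotientGroup.eq_one_iff (N := D) d₁).mpr hd₁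
  have h2 : π d₂ = 1 := (QuotientGroup.eq_one_iff (N := D) d₂).mpr hd₂
  have key : π (g * h' * g⁻¹ * h'⁻¹) = 1 := by
    rw [hg, hh]
    simp only [map_mul, map_inv, map_zpow, h1, h2, one_mul, mul_inv_rev]
    have hc : Commute ((π u) ^ i) ((π u) ^ j) := by
      unfold Commute SemiconjBy
      rw [← zpow_add, ← zpow_add, add_comm]
    rw [hc.eq]
    group
  exact (QuotientGroup.eq_one_iff (N := D) _).mp key

lemma normal_of_comm_mem {D M : Subgroup G}
    (hcomm : ∀ g h' : G, g * h' * g⁻¹ * h'⁻¹ ∈ D) (hDM : D ≤ M) : M.Normal := by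
  constructor
  intro m hm g
  have h1 : (g * m * g⁻¹ * m⁻¹) * m ∈ M := M.mul_mem (hDM (hcomm g m)) hm
  have e : g * m * g⁻¹ = g * m * g⁻¹ * m⁻¹ * m := by group
  rw [e]
  exact h1

lemma adj_of_center {L : Subgroup G} (hL : IsCoatom L) (hLn : L.Normal)
    (hLna : ∃ a ∈ L, ∃ b ∈ L, a * b ≠ b * a) {v w : G} (hv : v ∈ centerOf L)
    (hnv : ∃ b, ¬ (b * v = v * b)) (hw : w ∉ L) : (ncGraph G).Adj w v := by
  have hLC : L ≤ Subgroup.centralizer {v} := by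
    intro l hl
    exact mem_cz.mpr ((Subgroup.mem_inf.mp hv).2 l hl).symm
  have hCt : Subgroup.centralizer {v} ≠ ⊤ := by
    obtain ⟨b, hb⟩ := hnv
    intro ht
    have hbv : b ∈ Subgroup.centralizer {v} := ht ▸ Subgroup.mem_top b
    exact hb (mem_cz.mp hbv).symm
  have hCL : Subgroup.centralizer {v} = L := centralizer_eq hL hLC hCt
  have hwv : w * v ≠ v * w := by
    intro e
    exact hw (hCL ▸ mem_cz.mpr e.symm)
  exact adj_mk (center_sup_ne_top hLn hLna w)
    ((le_sup_right : Subgroup.zpowers w ≤ _) (Subgroup.mem_zpowers w))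
    ((le_sup_left : centerOf L ≤ _) hv) hwv

lemma adj_of_centerM {L M : Subgroup G} (hM : IsCoatom M)
    (hMna : ∃ a ∈ M, ∃ b ∈ M, a * b ≠ b * a) {x w : G} (hx : x ∈ centerOf M)
    (hxL : x ∈ L) (hnx : ∃ l, ¬ (l * x = x * l))
    (hcase : (L ⊓ Subgroup.centralizer {x}).Normal ∨ M.Normal)
    (hw : w ∉ M) : (ncGraph G).Adj w x := by
  by_cases hMn : M.Normal
  · exact adj_of_center hM hMn hMna hx hnx hw
  · have hD := hcase.resolve_right hMn
    have hMC : M ≤ Subgroup.centralizer {x} := by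
      intro m hm
      exact mem_cz.mpr ((Subgroup.mem_inf.mp hx).2 m hm).symm
    have hCt : Subgroup.centralizer {x} ≠ ⊤ := by
      obtain ⟨l, hl⟩ := hnx
      intro ht
      have : l ∈ Subgroup.centralizer {x} := ht ▸ Subgroup.mem_top l
      exact hl (mem_cz.mp this).symm
    have hCM : Subgroup.centralizer {x} = M := centralizer_eq hM hMC hCt
    have hwx : w * x ≠ x * w := by
      intro e
      exact hw (hCM ▸ mem_cz.mpr e.symm)
    have hxD : x ∈ L ⊓ Subgroup.centralizer {x} :=
      Subgroup.mem_inf.mpr ⟨hxL, mem_cz.mpr rfl⟩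
    have hDM : L ⊓ Subgroup.centralizer {x} ≤ M := hCM ▸ inf_le_right
    have hsup : (L ⊓ Subgroup.centralizer {x}) ⊔ Subgroup.zpowers w ≠ ⊤ := by
      intro ht
      exact hMn (normal_of_comm_mem (fun g h' => comm_mem_of_sup_zpowers hD ht g h') hDM)
    exact adj_mk hsup ((le_sup_right : Subgroup.zpowers w ≤ _) (Subgroup.mem_zpowers w))
      ((le_sup_left : L ⊓ Subgroup.centralizer {x} ≤ _) hxD) hwx

lemma walk2 {K : Subgroup G} (hK : K ≠ ⊤) {u v a b : G} (hu : u ∈ K) (hv : v ∈ K)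
    (ha : a ∈ K) (hna : a * u ≠ u * a) (hb : b ∈ K) (hnb : b * v ≠ v * b) :
    ∃ p : (ncGraph G).Walk u v, p.length ≤ 2 := by
  by_cases huv : u * v = v * u
  · by_cases hav : a * v = v * a
    · by_cases hbu : b * u = u * b
      · have h1 : (ncGraph G).Adj u (a * b) := by
          refine adj_mk hK hu (K.mul_mem ha hb) ?_
          intro e
          apply hna
          have e1 : a * u * b = u * a * b := by
            calc a * u * b = a * (u * b) := by rw [mul_assoc]
              _ = a * (b * u) := by rw [hbu]
              _ = a * b * u := by rw [mul_assoc]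
              _ = u * (a * b) := e.symm
              _ = u * a * b := by rw [mul_assoc]
          exact mul_right_cancel e1
        have h2 : (ncGraph G).Adj (a * b) v := by
          refine adj_mk hK (K.mul_mem ha hb) hv ?_
          intro e
          apply hnb
          have e1 : a * (b * v) = a * (v * b) := by
            calc a * (b * v) = a * b * v := by rw [mul_assoc]
              _ = v * (a * b) := e
              _ = v * a * b := by rw [mul_assoc]
              _ = a * v * b := by rw [hav]
              _ = a * (v * b) := by rw [mul_assoc]
          exact mul_left_cancel e1
        exact ⟨.cons h1 (.cons h2 .nil), by simp⟩
      · have h1 : (ncGraph G).Adj u b := adj_mk hK hu hb (fun e => hbu e.symm)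
        have h2 : (ncGraph G).Adj b v := adj_mk hK hb hv hnb
        exact ⟨.cons h1 (.cons h2 .nil), by simp⟩
    · have h1 : (ncGraph G).Adj u a := adj_mk hK hu ha (fun e => hna e.symm)
      have h2 : (ncGraph G).Adj a v := adj_mk hK ha hv hav
      exact ⟨.cons h1 (.cons h2 .nil), by simp⟩
  · exact ⟨.cons (adj_mk hK hu hv huv) .nil, by simp⟩

lemma three_le_dist {V : Type*} {Γ : SimpleGraph V} {u v : V} (hr : Γ.Reachable u v)
    (hne : u ≠ v) (hna : ¬ Γ.Adj u v)
    (hcw : ∀ w, Γ.Adj u w → Γ.Adj w v → False) : 3 ≤ Γ.dist u v := by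
  by_contra hlt
  push_neg at hlt
  obtain ⟨p, hp⟩ := hr.exists_walk_length_eq_dist
  have hl : p.length ≤ 2 := by omega
  cases p with
  | nil => exact hne rfl
  | cons h q =>
    cases q with
    | nil => exact hna h
    | @cons _ w' _ h' r =>
      have hr0 : r.length = 0 := by
        simp only [SimpleGraph.Walk.length_cons] at hl
        omega
      have hw' := SimpleGraph.Walk.eq_of_length_eq_zero hr0
      subst hw'
      exact hcw _ h h'


lemma claim1 {L M : Subgroup G} (hM : IsCoatom M) {x : G} (hxL : x ∈ L)
    (hxZ : x ∉ centerOf L) (hxM : x ∉ M)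
    (hcase : (L ⊓ Subgroup.centralizer {x}).Normal ∨ M.Normal) :
    ¬ (L ⊓ M ≤ Subgroup.centralizer {x}) := by
  intro hle
  have hLle : L ≤ Subgroup.centralizer {x} := by
    rcases hcase with hD | hMn
    · haveI := hD
      by_cases hDM : L ⊓ Subgroup.centralizer {x} ≤ M
      · exact absurd (hDM (Subgroup.mem_inf.mpr ⟨hxL, mem_cz.mpr rfl⟩)) hxM
      · have hsup : (L ⊓ Subgroup.centralizer {x}) ⊔ M = ⊤ :=
          hM.2 _ (lt_of_le_of_ne le_sup_right (fun he => hDM (le_sup_left.trans he.ge)))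
        intro l hl
        have hl2 : l ∈ (L ⊓ Subgroup.centralizer {x}) ⊔ M := by
          rw [hsup]; trivial
        rw [← SetLike.mem_coe, Subgroup.normal_mul] at hl2
        obtain ⟨d, hd, m, hm, hdm⟩ := hl2
        have hdL : d ∈ L := (Subgroup.mem_inf.mp hd).1
        have hdC : d ∈ Subgroup.centralizer {x} := (Subgroup.mem_inf.mp hd).2
        have hmL : m ∈ L := by
          have hm' : m = d⁻¹ * l := by rw [← hdm]; group
          rw [hm']
          exact L.mul_mem (L.inv_mem hdL) hl
        have hmC : m ∈ Subgroup.centralizer {x} := hle (Subgroup.mem_inf.mpr ⟨hmL, hm⟩)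
        have hlm : l = d * m := hdm.symm
        rw [hlm]
        exact Subgroup.mul_mem _ hdC hmC
    · intro l hl
      obtain ⟨m, hm, k, hlk⟩ := coatom_decomp hMn hM hxM l
      have hmL : m ∈ L := by
        have hm' : m = l * (x ^ k)⁻¹ := by rw [hlk]; group
        rw [hm']
        exact L.mul_mem hl (L.inv_mem (L.zpow_mem hxL k))
      have hmC : m ∈ Subgroup.centralizer {x} := hle (Subgroup.mem_inf.mpr ⟨hmL, hm⟩)
      rw [hlk]
      exact Subgroup.mul_mem _ hmC (mem_cz.mpr ((Commute.refl x).zpow_right k).eq)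
  exact hxZ (Subgroup.mem_inf.mpr ⟨hxL,
    Subgroup.mem_centralizer_iff.mpr (fun h hh => (mem_cz.mp (hLle hh)).symm)⟩)

lemma claim2 {L M : Subgroup G} (hLn : L.Normal) (hL : IsCoatom L) {y : G}
    (hyM : y ∈ M) (hyL : y ∉ L) (hyZ : y ∉ centerOf M) :
    ¬ (L ⊓ M ≤ Subgroup.centralizer {y}) := by
  intro hle
  have hMle : M ≤ Subgroup.centralizer {y} := by
    intro m hm
    obtain ⟨l, hlL, k, e⟩ := coatom_decomp hLn hL hyL m
    have hlM : l ∈ M := by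
      have hl' : l = m * (y ^ k)⁻¹ := by rw [e]; group
      rw [hl']
      exact M.mul_mem hm (M.inv_mem (M.zpow_mem hyM k))
    have hlC : l ∈ Subgroup.centralizer {y} := hle (Subgroup.mem_inf.mpr ⟨hlL, hlM⟩)
    rw [e]
    exact Subgroup.mul_mem _ hlC (mem_cz.mpr ((Commute.refl y).zpow_right k).eq)
  exact hyZ (Subgroup.mem_inf.mpr ⟨hyM,
    Subgroup.mem_centralizer_iff.mpr (fun h hh => (mem_cz.mp (hMle hh)).symm)⟩)


/-- Lemma 2.11 / `lem:ncmaxnormcombined`. -/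
theorem statement_6 (h2gen : ∃ a b : G, Subgroup.closure {a, b} = ⊤)
    {L M : Subgroup G} (hL : IsCoatom L) (hM : IsCoatom M) (hLn : L.Normal)
    (hLna : ∃ a ∈ L, ∃ b ∈ L, a * b ≠ b * a)
    (hMna : ∃ a ∈ M, ∃ b ∈ M, a * b ≠ b * a)
    {x y : G} (hxL : x ∈ L) (hxZ : x ∉ centerOf L)
    (hyM : y ∈ M) (hyZ : y ∉ centerOf M)
    (hcase : (L ⊓ Subgroup.centralizer {x}).Normal ∨ M.Normal) :
    (ncGraph G).Reachable x y ∧ (ncGraph G).dist x y ≤ 3 ∧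
      ((ncGraph G).dist x y = 3 ↔
        (x ∈ centerOf M ∧ y ∉ L ∧
          ∀ K : Subgroup G, IsCoatom K → y ∈ K → (∃ k ∈ K, k * y ≠ y * k) → K = M) ∨
        (y ∈ centerOf L ∧ x ∉ M ∧
          ∀ K : Subgroup G, IsCoatom K → x ∈ K → (∃ k ∈ K, k * x ≠ x * k) → K = L)) := by
  classical
  have hLtop : L ≠ (⊤ : Subgroup G) := hL.1
  have hMtop : M ≠ (⊤ : Subgroup G) := hM.1
  have hxnc : ∃ l ∈ L, ¬ (l * x = x * l) := by
    by_contra hc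
    push_neg at hc
    exact hxZ (Subgroup.mem_inf.mpr ⟨hxL,
      Subgroup.mem_centralizer_iff.mpr (fun h hh => hc h hh)⟩)
  have hync : ∃ m ∈ M, ¬ (m * y = y * m) := by
    by_contra hc
    push_neg at hc
    exact hyZ (Subgroup.mem_inf.mpr ⟨hyM,
      Subgroup.mem_centralizer_iff.mpr (fun h hh => hc h hh)⟩)
  obtain ⟨a, haL, hax⟩ := hxnc
  obtain ⟨b, hbM, hby⟩ := hync
  -- the lower-bound data under Φ
  have hlow : ((x ∈ centerOf M ∧ y ∉ L ∧
          ∀ K : Subgroup G, IsCoatom K → y ∈ K → (∃ k ∈ K, k * y ≠ y * k) → K = M) ∨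
        (y ∈ centerOf L ∧ x ∉ M ∧
          ∀ K : Subgroup G, IsCoatom K → x ∈ K → (∃ k ∈ K, k * x ≠ x * k) → K = L)) →
      (x ≠ y ∧ ¬ (ncGraph G).Adj x y ∧
        ∀ w, (ncGraph G).Adj x w → (ncGraph G).Adj w y → False) := by
    rintro (⟨hxZM, hyL, huniq⟩ | ⟨hyZL, hxM, huniq⟩)
    · have hcomm : ∀ m ∈ M, m * x = x * m := fun m hm => (Subgroup.mem_inf.mp hxZM).2 m hm
      refine ⟨fun e => hyZ (e ▸ hxZM), fun hadj => hadj.1 (hcomm y hyM).symm, ?_⟩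
      intro w hxw hwy
      obtain ⟨K, hK, hKle⟩ := exists_coatom h2gen hwy.2
      have hyK : y ∈ K := hKle (Subgroup.subset_closure (by simp))
      have hwK : w ∈ K := hKle (Subgroup.subset_closure (by simp))
      have hKM : K = M := huniq K hK hyK ⟨w, hwK, hwy.1⟩
      exact hxw.1 (hcomm w (hKM ▸ hwK)).symm
    · have hcomm : ∀ l ∈ L, l * y = y * l := fun l hl => (Subgroup.mem_inf.mp hyZL).2 l hl
      refine ⟨fun e => hxZ (e.symm ▸ hyZL), fun hadj => hadj.1 (hcomm x hxL), ?_⟩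
      intro w hxw hwy
      obtain ⟨K, hK, hKle⟩ := exists_coatom h2gen hxw.2
      have hxK : x ∈ K := hKle (Subgroup.subset_closure (by simp))
      have hwK : w ∈ K := hKle (Subgroup.subset_closure (by simp))
      have hKL : K = L := huniq K hK hxK ⟨w, hwK, fun e => hxw.1 e.symm⟩
      exact hwy.1 (hcomm w (hKL ▸ hwK))
  -- the core walks
  have hcore : (∃ p : (ncGraph G).Walk x y, p.length ≤ 3) ∧
      (¬ ((x ∈ centerOf M ∧ y ∉ L ∧
          ∀ K : Subgroup G, IsCoatom K → y ∈ K → (∃ k ∈ K, k * y ≠ y * k) → K = M) ∨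
        (y ∈ centerOf L ∧ x ∉ M ∧
          ∀ K : Subgroup G, IsCoatom K → x ∈ K → (∃ k ∈ K, k * x ≠ x * k) → K = L)) →
        ∃ p : (ncGraph G).Walk x y, p.length ≤ 2) := by
    by_cases hyZL : y ∈ centerOf L
    · by_cases hxZM : x ∈ centerOf M
      · -- case d
        have hnL : ¬ ((⊤ : Subgroup G) ≤ L) := fun h => hLtop (top_le_iff.mp h)
        have hnM : ¬ ((⊤ : Subgroup G) ≤ M) := fun h => hMtop (top_le_iff.mp h)
        obtain ⟨w, -, hwL, hwM⟩ := cover hnL hnM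
        have h1 : (ncGraph G).Adj x w :=
          (adj_of_centerM hM hMna hxZM hxL ⟨a, hax⟩ hcase hwM).symm
        have h2 : (ncGraph G).Adj w y := adj_of_center hL hLn hLna hyZL ⟨b, hby⟩ hwL
        exact ⟨⟨.cons h1 (.cons h2 .nil), by simp⟩, fun _ => ⟨.cons h1 (.cons h2 .nil), by simp⟩⟩
      · by_cases hxM : x ∈ M
        · -- case A : x ∈ M \ Z(M)
          have hxncM : ∃ m ∈ M, ¬ (m * x = x * m) := by
            by_contra hc
            push_neg at hc
            exact hxZM (Subgroup.mem_inf.mpr ⟨hxM,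
              Subgroup.mem_centralizer_iff.mpr (fun h hh => hc h hh)⟩)
          obtain ⟨m, hmM, hmx⟩ := hxncM
          obtain ⟨p, hp⟩ := walk2 hMtop hxM hyM hmM hmx hbM hby
          exact ⟨⟨p, hp.trans (by norm_num)⟩, fun _ => ⟨p, hp⟩⟩
        · -- case b : x ∉ M, y ∈ Z(L)
          have hbL : b ∉ L := fun hbL => hby ((Subgroup.mem_inf.mp hyZL).2 b hbL)
          -- length-3 walk
          have hn1 : ¬ (L ⊓ M ≤ Subgroup.centralizer {x}) := claim1 hM hxL hxZ hxM hcase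
          have hn2 : ¬ (L ⊓ M ≤ Subgroup.centralizer (M : Set G)) := by
            intro hle
            obtain ⟨m₁, hm₁, m₂, hm₂, hmm⟩ := hMna
            apply hmm
            obtain ⟨l₁, hl₁, k₁, e₁⟩ := coatom_decomp hLn hL hbL m₁
            obtain ⟨l₂, hl₂, k₂, e₂⟩ := coatom_decomp hLn hL hbL m₂
            have hl₁M : l₁ ∈ M := by
              have : l₁ = m₁ * (b ^ k₁)⁻¹ := by rw [e₁]; group
              rw [this]; exact M.mul_mem hm₁ (M.inv_mem (M.zpow_mem hbM k₁))
            have hl₂M : l₂ ∈ M := by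
              have : l₂ = m₂ * (b ^ k₂)⁻¹ := by rw [e₂]; group
              rw [this]; exact M.mul_mem hm₂ (M.inv_mem (M.zpow_mem hbM k₂))
            have hc₁ : l₁ ∈ Subgroup.centralizer (M : Set G) :=
              hle (Subgroup.mem_inf.mpr ⟨hl₁, hl₁M⟩)
            have hc₂ : l₂ ∈ Subgroup.centralizer (M : Set G) :=
              hle (Subgroup.mem_inf.mpr ⟨hl₂, hl₂M⟩)
            have c11 : Commute l₁ l₂ := Subgroup.mem_centralizer_iff.mp hc₂ l₁ hl₁M
            have c12 : Commute l₁ (b ^ k₂) :=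
              (Subgroup.mem_centralizer_iff.mp hc₁ (b ^ k₂) (M.zpow_mem hbM k₂)).symm
            have c21 : Commute (b ^ k₁) l₂ :=
              Subgroup.mem_centralizer_iff.mp hc₂ (b ^ k₁) (M.zpow_mem hbM k₁)
            have c22 : Commute (b ^ k₁) (b ^ k₂) := by
              unfold Commute SemiconjBy
              rw [← zpow_add, ← zpow_add, add_comm]
            rw [e₁, e₂]
            exact ((c11.mul_right c12).mul_left (c21.mul_right c22)).eq
          obtain ⟨aa, haLM, haCx, haCM⟩ := cover hn1 hn2
          have hq1 : ¬ (M ≤ L) := fun hle => hbL (hle hbM)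
          have hq2 : ¬ (M ≤ Subgroup.centralizer {aa}) := by
            intro hle
            exact haCM (Subgroup.mem_centralizer_iff.mpr
              (fun h hh => (mem_cz.mp (hle hh)).symm))
          obtain ⟨w, hwM, hwL, hwCa⟩ := cover hq1 hq2
          have h1 : (ncGraph G).Adj x aa :=
            adj_mk hLtop hxL (Subgroup.mem_inf.mp haLM).1 (fun e => haCx (mem_cz.mpr e))
          have h2 : (ncGraph G).Adj aa w :=
            adj_mk hMtop (Subgroup.mem_inf.mp haLM).2 hwM (fun e => hwCa (mem_cz.mpr e))
          have h3 : (ncGraph G).Adj w y := adj_of_center hL hLn hLna hyZL ⟨b, hby⟩ hwL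
          refine ⟨⟨.cons h1 (.cons h2 (.cons h3 .nil)), by simp⟩, ?_⟩
          -- conditional length-2 walk
          intro hnphi
          have hnuniq : ∃ K : Subgroup G, IsCoatom K ∧ x ∈ K ∧
              (∃ k ∈ K, k * x ≠ x * k) ∧ K ≠ L := by
            by_contra hu
            push_neg at hu
            exact hnphi (Or.inr ⟨hyZL, hxM, fun K hK hxK hknc => hu K hK hxK hknc⟩)
          obtain ⟨K, hK, hxK, ⟨k, hkK, hknc⟩, hKL⟩ := hnuniq
          have hnKL : ¬ (K ≤ L) := fun hle => hKL (coatom_eq_of_le hK hL hle)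
          have hnKC : ¬ (K ≤ Subgroup.centralizer {x}) :=
            fun hle => hknc (mem_cz.mp (hle hkK)).symm
          obtain ⟨w', hwK', hwL', hwC'⟩ := cover hnKL hnKC
          have g1 : (ncGraph G).Adj x w' := adj_mk hK.1 hxK hwK' (fun e => hwC' (mem_cz.mpr e))
          have g2 : (ncGraph G).Adj w' y := adj_of_center hL hLn hLna hyZL ⟨b, hby⟩ hwL'
          exact ⟨.cons g1 (.cons g2 .nil), by simp⟩
    · by_cases hyL : y ∈ L
      · -- case B : y ∈ L \ Z(L)
        have hyncL : ∃ l ∈ L, ¬ (l * y = y * l) := by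
          by_contra hc
          push_neg at hc
          exact hyZL (Subgroup.mem_inf.mpr ⟨hyL,
            Subgroup.mem_centralizer_iff.mpr (fun h hh => hc h hh)⟩)
        obtain ⟨l, hlL, hly⟩ := hyncL
        obtain ⟨p, hp⟩ := walk2 hLtop hxL hyL haL hax hlL hly
        exact ⟨⟨p, hp.trans (by norm_num)⟩, fun _ => ⟨p, hp⟩⟩
      · by_cases hxZM : x ∈ centerOf M
        · -- case c : x ∈ Z(M), y ∉ L
          have hxM : x ∈ M := (Subgroup.mem_inf.mp hxZM).1
          have haM : a ∉ M := fun haM => hax ((Subgroup.mem_inf.mp hxZM).2 a haM)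
          -- length-3 walk
          have hn1 : ¬ (L ⊓ M ≤ Subgroup.centralizer {y}) := claim2 hLn hL hyM hyL hyZ
          have hn2 : ¬ (L ⊓ M ≤ Subgroup.centralizer (L : Set G)) := by
            intro hle
            exact hxZ (Subgroup.mem_inf.mpr ⟨hxL, hle (Subgroup.mem_inf.mpr ⟨hxL, hxM⟩)⟩)
          obtain ⟨bb, hbLM, hbCy, hbCL⟩ := cover hn1 hn2
          have hq1 : ¬ (L ≤ M) := fun hle => haM (hle haL)
          have hq2 : ¬ (L ≤ Subgroup.centralizer {bb}) := by
            intro hle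
            exact hbCL (Subgroup.mem_centralizer_iff.mpr
              (fun h hh => (mem_cz.mp (hle hh)).symm))
          obtain ⟨w, hwL, hwM, hwCb⟩ := cover hq1 hq2
          have h1 : (ncGraph G).Adj x w :=
            (adj_of_centerM hM hMna hxZM hxL ⟨a, hax⟩ hcase hwM).symm
          have h2 : (ncGraph G).Adj w bb :=
            adj_mk hLtop hwL (Subgroup.mem_inf.mp hbLM).1 (fun e => hwCb (mem_cz.mpr e.symm))
          have h3 : (ncGraph G).Adj bb y :=
            adj_mk hMtop (Subgroup.mem_inf.mp hbLM).2 hyM (fun e => hbCy (mem_cz.mpr e.symm))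
          refine ⟨⟨.cons h1 (.cons h2 (.cons h3 .nil)), by simp⟩, ?_⟩
          intro hnphi
          have hnuniq : ∃ K : Subgroup G, IsCoatom K ∧ y ∈ K ∧
              (∃ k ∈ K, k * y ≠ y * k) ∧ K ≠ M := by
            by_contra hu
            push_neg at hu
            exact hnphi (Or.inl ⟨hxZM, hyL, fun K hK hyK hknc => hu K hK hyK hknc⟩)
          obtain ⟨K, hK, hyK, ⟨k, hkK, hknc⟩, hKM⟩ := hnuniq
          have hnKM : ¬ (K ≤ M) := fun hle => hKM (coatom_eq_of_le hK hM hle)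
          have hnKC : ¬ (K ≤ Subgroup.centralizer {y}) :=
            fun hle => hknc (mem_cz.mp (hle hkK)).symm
          obtain ⟨w', hwK', hwM', hwC'⟩ := cover hnKM hnKC
          have g2 : (ncGraph G).Adj w' y :=
            adj_mk hK.1 hwK' hyK (fun e => hwC' (mem_cz.mpr e.symm))
          have g1 : (ncGraph G).Adj x w' :=
            (adj_of_centerM hM hMna hxZM hxL ⟨a, hax⟩ hcase hwM').symm
          exact ⟨.cons g1 (.cons g2 .nil), by simp⟩
        · by_cases hxM : x ∈ M
          · -- case A again
            have hxncM : ∃ m ∈ M, ¬ (m * x = x * m) := by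
              by_contra hc
              push_neg at hc
              exact hxZM (Subgroup.mem_inf.mpr ⟨hxM,
                Subgroup.mem_centralizer_iff.mpr (fun h hh => hc h hh)⟩)
            obtain ⟨m, hmM, hmx⟩ := hxncM
            obtain ⟨p, hp⟩ := walk2 hMtop hxM hyM hmM hmx hbM hby
            exact ⟨⟨p, hp.trans (by norm_num)⟩, fun _ => ⟨p, hp⟩⟩
          · -- case a : x ∉ M, y ∉ L
            by_cases hadj : (ncGraph G).Adj x y
            · exact ⟨⟨.cons hadj .nil, by simp⟩, fun _ => ⟨.cons hadj .nil, by simp⟩⟩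
            · have hn1 : ¬ (L ⊓ M ≤ Subgroup.centralizer {x}) := claim1 hM hxL hxZ hxM hcase
              have hn2 : ¬ (L ⊓ M ≤ Subgroup.centralizer {y}) := claim2 hLn hL hyM hyL hyZ
              obtain ⟨w, hwLM, hwCx, hwCy⟩ := cover hn1 hn2
              have h1 : (ncGraph G).Adj x w :=
                adj_mk hLtop hxL (Subgroup.mem_inf.mp hwLM).1 (fun e => hwCx (mem_cz.mpr e))
              have h2 : (ncGraph G).Adj w y :=
                adj_mk hMtop (Subgroup.mem_inf.mp hwLM).2 hyM (fun e => hwCy (mem_cz.mpr e.symm))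
              exact ⟨⟨.cons h1 (.cons h2 .nil), by simp⟩,
                fun _ => ⟨.cons h1 (.cons h2 .nil), by simp⟩⟩
  obtain ⟨⟨p3, hp3⟩, hshort⟩ := hcore
  have hreach : (ncGraph G).Reachable x y := p3.reachable
  have hle3 : (ncGraph G).dist x y ≤ 3 := (SimpleGraph.dist_le p3).trans hp3
  refine ⟨hreach, hle3, ?_, ?_⟩
  · intro h3
    by_contra hnphi
    obtain ⟨p2, hp2⟩ := hshort hnphi
    have := (SimpleGraph.dist_le p2).trans hp2
    omega
  · intro hphi
    obtain ⟨hne, hnadj, hcw⟩ := hlow hphi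
    have h3le := three_le_dist hreach hne hnadj hcw
    omega


end NC
end

section
/- Let G be a finitely generated non-cyclic group containing a normal maximal subgroup M, and suppose that K ∩ M = L ∩ M for all maximal subgroups K and L of G distinct from M. Then for any two distinct maximal subgroups K and L of G distinct from M, K ∩ M = K ∩ L = Φ(G). Moreover, if G is finite, then G is soluble; and if in addition M is the unique normal maximal subgroup of G, then G contains exactly two conjugacy classes of maximal subgroups. -/
open scoped Pointwise


open Subgroup

namespace NC

variable {G : Type*} [Group G]

lemma mem_conjSub {g x : G} {H : Subgroup G} : x ∈ conjSub g H ↔ g⁻¹ * x * g ∈ H := by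
  constructor
  · rintro ⟨h, hh, rfl⟩
    simpa [mul_assoc] using hh
  · intro h
    exact ⟨g⁻¹ * x * g, h, by simp [mul_assoc]⟩

lemma conjSub_of_normal {H : Subgroup G} (hH : H.Normal) (g : G) : conjSub g H = H := by
  ext x
  rw [mem_conjSub]
  constructor
  · intro h
    simpa [mul_assoc] using hH.conj_mem _ h g
  · intro h
    simpa [mul_assoc] using hH.conj_mem _ h g⁻¹

lemma conjSub_mono (g : G) {H K : Subgroup G} (h : H ≤ K) : conjSub g H ≤ conjSub g K :=
  Subgroup.map_mono h

lemma conjSub_one (H : Subgroup G) : conjSub 1 H = H := by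
  ext x; simp [mem_conjSub]

lemma conjSub_conjSub (g₁ g₂ : G) (H : Subgroup G) :
    conjSub g₁ (conjSub g₂ H) = conjSub (g₁ * g₂) H := by
  ext x; simp [mem_conjSub, mul_assoc]

section PartA

variable {M : Subgroup G}

/-- If `x ∉ M` then `M` together with `x` generates. -/
lemma sup_closure_eq_top (hM : IsCoatom M) {x : G} (hx : x ∉ M) :
    M ⊔ closure {x} = ⊤ := by
  apply hM.2
  refine lt_of_le_of_ne le_sup_left ?_
  intro h
  have : x ∈ M ⊔ closure {x} := SetLike.le_def.mp le_sup_right (subset_closure (Set.mem_singleton x))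
  rw [← h] at this
  exact hx this

/-- A maximal subgroup `T` containing `x ∉ M` is generated by `T ⊓ M` and `x`. -/
lemma coatom_eq_inf_sup (hM : IsCoatom M) (hMn : M.Normal) {T : Subgroup G}
    {x : G} (hxT : x ∈ T) (hxM : x ∉ M) :
    T = (T ⊓ M) ⊔ closure {x} := by
  refine le_antisymm ?_ (sup_le inf_le_left ((closure_le T).mpr (by simpa using hxT)))
  intro t ht
  have htop : (t : G) ∈ (↑(M ⊔ closure {x}) : Set G) := by
    rw [sup_closure_eq_top hM hxM]; trivial
  rw [Subgroup.normal_mul] at htop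
  obtain ⟨m, hm, c, hc, rfl⟩ := htop
  have hcT : c ∈ T := (closure_le T).mpr (by simpa using hxT) hc
  have hmT : m ∈ T := by
    have := mul_mem ht (inv_mem hcT)
    simpa using this
  exact mul_mem (mem_sup_left ⟨hmT, hm⟩) (mem_sup_right hc)

/-- The intersection of any maximal subgroup `K ≠ M` with `M` is the Frattini subgroup. -/
lemma inf_eq_frattini (hM : IsCoatom M)
    (hint : ∀ K L : Subgroup G, IsCoatom K → IsCoatom L → K ≠ M → L ≠ M → K ⊓ M = L ⊓ M)
    {K : Subgroup G} (hK : IsCoatom K) (hKM : K ≠ M) : K ⊓ M = frattini G := by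
  refine le_antisymm ?_ (le_inf (frattini_le_coatom hK) (frattini_le_coatom hM))
  rw [frattini, Order.radical]
  refine le_iInf fun T => le_iInf fun hT => ?_
  by_cases hTM : T = M
  · exact hTM ▸ inf_le_right
  · rw [hint K T hK hT hKM hTM]; exact inf_le_left

lemma inf_coatoms_le (hM : IsCoatom M) (hMn : M.Normal)
    (hint : ∀ K L : Subgroup G, IsCoatom K → IsCoatom L → K ≠ M → L ≠ M → K ⊓ M = L ⊓ M)
    {K L : Subgroup G} (hK : IsCoatom K) (hL : IsCoatom L)
    (hKM : K ≠ M) (hLM : L ≠ M) (hKL : K ≠ L) : K ⊓ L ≤ M := by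
  intro x hx
  by_contra hxM
  apply hKL
  have h1 : K = (K ⊓ M) ⊔ closure {x} := coatom_eq_inf_sup hM hMn hx.1 hxM
  have h2 : L = (L ⊓ M) ⊔ closure {x} := coatom_eq_inf_sup hM hMn hx.2 hxM
  rw [h1, h2, hint K L hK hL hKM hLM]

lemma partA (hM : IsCoatom M) (hMn : M.Normal)
    (hint : ∀ K L : Subgroup G, IsCoatom K → IsCoatom L → K ≠ M → L ≠ M → K ⊓ M = L ⊓ M)
    {K L : Subgroup G} (hK : IsCoatom K) (hL : IsCoatom L)
    (hKM : K ≠ M) (hLM : L ≠ M) (hKL : K ≠ L) :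
    K ⊓ M = K ⊓ L ∧ K ⊓ M = frattini G := by
  have hphi := inf_eq_frattini hM hint hK hKM
  refine ⟨le_antisymm ?_ ?_, hphi⟩
  · refine le_inf inf_le_left ?_
    rw [hphi]
    exact frattini_le_coatom hL
  · exact le_inf inf_le_left ((le_inf inf_le_left
      (inf_coatoms_le hM hMn hint hK hL hKM hLM hKL)).trans inf_le_right)

end PartA

section Transfer

variable {H : Type*} [Group H] {φ : G →* H}

lemma isCoatom_map_of (hφ : Function.Surjective φ) {K : Subgroup G}
    (hker : φ.ker ≤ K) (hK : IsCoatom K) : IsCoatom (K.map φ) := by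
  constructor
  · intro h
    have h2 := comap_map_eq_self hker
    rw [h, comap_top] at h2
    exact hK.1 h2.symm
  · intro B hB
    have hlt : K < B.comap φ := by
      refine lt_of_le_of_ne ?_ ?_
      · rw [← comap_map_eq_self hker]
        exact comap_mono hB.le
    
      · intro e
        apply hB.ne
        rw [e, map_comap_eq_self_of_surjective hφ]
    have := hK.2 _ hlt
    rw [← map_comap_eq_self_of_surjective hφ B, this, Subgroup.map_top_of_surjective φ hφ]

lemma map_inf_of (hφ : Function.Surjective φ) {A B : Subgroup G}
    (hA : φ.ker ≤ A) (hB : φ.ker ≤ B) :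
    (A ⊓ B).map φ = A.map φ ⊓ B.map φ := by
  apply comap_injective hφ
  rw [comap_inf, comap_map_eq_self hA, comap_map_eq_self hB,
    comap_map_eq_self (le_inf hA hB)]

end Transfer


section Finite

variable [Finite G] {M : Subgroup G}

lemma finite_part (hnc : ¬ IsCyclic G) (hM : IsCoatom M) (hMn : M.Normal)
    (hint : ∀ K L : Subgroup G, IsCoatom K → IsCoatom L → K ≠ M → L ≠ M → K ⊓ M = L ⊓ M) :
    IsSolvable G ∧
      ((∀ T : Subgroup G, IsCoatom T → T.Normal → T = M) → TwoMaxClasses G) := by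
  classical
  -- an element outside M
  obtain ⟨x', -, hx'⟩ := SetLike.not_le_iff_exists.mp
    (fun h => hM.1 (top_le_iff.mp h))
  -- existence of a maximal subgroup distinct from M
  obtain ⟨K₀, hK₀, hK₀ne⟩ : ∃ K : Subgroup G, IsCoatom K ∧ K ≠ M := by
    have hcx : closure {x'} ≠ ⊤ := by
      intro h
      apply hnc
      exact ⟨x', fun y => show y ∈ zpowers x' by
        rw [zpowers_eq_closure, h]; trivial⟩
    rcases eq_top_or_exists_le_coatom (closure {x'}) with h | ⟨K, hK, hle⟩
    · exact absurd h hcx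
    · refine ⟨K, hK, fun e => hx' ?_⟩
      rw [← e]
      exact hle (subset_closure (Set.mem_singleton x'))
  have hfratK : ∀ K : Subgroup G, IsCoatom K → K ≠ M → K ⊓ M = frattini G :=
    fun K hK hKM => inf_eq_frattini hM hint hK hKM
  -- quotient by the Frattini subgroup
  set Φ : Subgroup G := frattini G with hΦdef
  set π : G →* G ⧸ Φ := QuotientGroup.mk' Φ with hπdef
  have hπ : Function.Surjective π := QuotientGroup.mk'_surjective Φ
  have hker : π.ker = Φ := QuotientGroup.ker_mk' Φ
  have hkerM : π.ker ≤ M := by rw [hker]; exact frattini_le_coatom hM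
  have hkerK : ∀ K : Subgroup G, IsCoatom K → π.ker ≤ K := by
    intro K hK; rw [hker]; exact frattini_le_coatom hK
  set Mb : Subgroup (G ⧸ Φ) := M.map π with hMbdef
  have hMb : IsCoatom Mb := isCoatom_map_of hπ hkerM hM
  haveI hMbn : Mb.Normal := hMn.map π hπ
  have hcomapMb : Mb.comap π = M := comap_map_eq_self hkerM
  -- intersection with Mb of other maximals is trivial
  have hWM : ∀ W : Subgroup (G ⧸ Φ), IsCoatom W → W ≠ Mb → W ⊓ Mb = ⊥ := by
    intro W hW hWne
    have hK : IsCoatom (W.comap π) := isCoatom_comap_of_surjective hπ hW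
    have hKM : W.comap π ≠ M := by
      intro e
      apply hWne
      rw [← map_comap_eq_self_of_surjective hπ W, e, ← hMbdef]
    have hmW : (W.comap π).map π = W := map_comap_eq_self_of_surjective hπ W
    rw [← hmW, hMbdef, ← map_inf_of hπ (hkerK _ hK) hkerM, hfratK _ hK hKM]
    rw [Subgroup.map_eq_bot_iff, hker]
  -- every maximal subgroup other than Mb is generated by any of its elements outside Mb
  have hgen : ∀ W : Subgroup (G ⧸ Φ), IsCoatom W → ∀ x ∈ W, x ∉ Mb → W = zpowers x := by
    intro W hW x hxW hxMb
    have hK : IsCoatom (W.comap π) := isCoatom_comap_of_surjective hπ hW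
    obtain ⟨g, hg⟩ := hπ x
    have hgK : g ∈ W.comap π := by
      rw [mem_comap, hg]; exact hxW
    have hgM : g ∉ M := by
      intro h
      apply hxMb
      rw [← hg, hMbdef]
      exact ⟨g, h, rfl⟩
    have hKM : W.comap π ≠ M := fun e => hgM (e ▸ hgK)
    have h2 : W.comap π = (W.comap π ⊓ M) ⊔ closure {g} :=
      coatom_eq_inf_sup hM hMn hgK hgM
    have h3 : (W.comap π).map π = W := map_comap_eq_self_of_surjective hπ W
    rw [← h3, h2, Subgroup.map_sup, hfratK _ hK hKM]
    have h4 : Φ.map π = ⊥ := by rw [Subgroup.map_eq_bot_iff, hker]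
    rw [h4, MonoidHom.map_closure, Set.image_singleton, hg, bot_sup_eq,
      zpowers_eq_closure]
  -- Mb is nontrivial
  have hMb_ne_bot : Mb ≠ ⊥ := by
    intro e
    have : M = Φ := by
      calc M = Mb.comap π := hcomapMb.symm
        _ = (⊥ : Subgroup (G ⧸ Φ)).comap π := by rw [e]
        _ = π.ker := rfl
        _ = Φ := hker
    have hMK : M ≤ K₀ := by
      rw [this]; exact frattini_le_coatom hK₀
    rcases hMK.lt_or_eq with h | h
    · exact hK₀.1 (hM.2 _ h)
    · exact hK₀ne h.symm
  set W₀ : Subgroup (G ⧸ Φ) := K₀.map π with hW₀def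
  have hW₀ : IsCoatom W₀ := isCoatom_map_of hπ (hkerK _ hK₀) hK₀
  have hW₀ne : W₀ ≠ Mb := by
    intro e
    apply hK₀ne
    rw [← comap_map_eq_self (hkerK _ hK₀), ← hW₀def, e, hcomapMb]
  have hW₀notle : ¬ W₀ ≤ Mb := by
    intro h
    rcases h.lt_or_eq with h' | h'
    · exact hMb.1 (hW₀.2 _ h')
    · exact hW₀ne h'
  obtain ⟨x₀, hx₀W, hx₀Mb⟩ := SetLike.not_le_iff_exists.mp hW₀notle
  -- Mb is a q-group for some prime q
  have hq : ∃ q : ℕ, q.Prime ∧ IsPGroup q Mb := by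
    haveI : Nontrivial Mb := (Subgroup.nontrivial_iff_ne_bot Mb).mpr hMb_ne_bot
    have hn1 : 1 < Nat.card Mb := Finite.one_lt_card
    set q := (Nat.card Mb).minFac with hqdef
    have hqp : q.Prime := Nat.minFac_prime (by omega)
    haveI : Fact q.Prime := ⟨hqp⟩
    obtain ⟨m, hm⟩ := exists_prime_orderOf_dvd_card' (G := Mb) q (Nat.minFac_dvd _)
    have hz : IsPGroup q (zpowers m) := by
      rw [IsPGroup.iff_card]
      exact ⟨1, by rw [Nat.card_zpowers, hm, pow_one]⟩
    obtain ⟨S, hS⟩ := hz.exists_le_sylow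
    set S' : Subgroup (G ⧸ Φ) := Subgroup.map Mb.subtype (S : Subgroup Mb) with hS'def
    have hS'le : S' ≤ Mb := map_subtype_le _
    have hS'bot : S' ≠ ⊥ := by
      intro e
      have hmS : (m : G ⧸ Φ) ∈ S' := ⟨m, hS (mem_zpowers m), rfl⟩
      rw [e, Subgroup.mem_bot] at hmS
      have : m = 1 := Subtype.ext hmS
      rw [this, orderOf_one] at hm
      exact hqp.one_lt.ne (by omega)
    have hfr : (normalizer (S' : Set (G ⧸ Φ))) ⊔ Mb = ⊤ := Sylow.normalizer_sup_eq_top S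
    by_cases hNr : (normalizer (S' : Set (G ⧸ Φ))) = ⊤
    · haveI hS'n : S'.Normal := normalizer_eq_top_iff.mp hNr
      by_cases hH : S' ⊔ W₀ = ⊤
      · have hMS : Mb ≤ S' := by
          intro y hy
          have hy2 : y ∈ (↑(S' ⊔ W₀) : Set (G ⧸ Φ)) := by rw [hH]; trivial
          rw [Subgroup.normal_mul] at hy2
          obtain ⟨s, hs, w, hw, rfl⟩ := hy2
          have hwMb : w ∈ Mb := by
            have : w = s⁻¹ * (s * w) := by group
            rw [this]
            exact mul_mem (inv_mem (hS'le hs)) hy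
          have : w ∈ W₀ ⊓ Mb := ⟨hw, hwMb⟩
          rw [hWM W₀ hW₀ hW₀ne, Subgroup.mem_bot] at this
          rw [this]
          simpa using hs
        have hEq : S' = Mb := le_antisymm hS'le hMS
        refine ⟨q, hqp, ?_⟩
        rw [← hEq]
        exact S.2.map Mb.subtype
      · exfalso
        rcases eq_top_or_exists_le_coatom (S' ⊔ W₀) with h | ⟨T, hT, hle⟩
        · exact hH h
        · have hTne : T ≠ Mb := by
            intro e
            apply hx₀Mb
            rw [← e]
            exact hle (SetLike.le_def.mp le_sup_right hx₀W)
          have : S' ≤ T ⊓ Mb := le_inf (le_sup_left.trans hle) hS'le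
          rw [hWM T hT hTne] at this
          exact hS'bot (le_bot_iff.mp this)
    · exfalso
      have hNrM : ¬ (normalizer (S' : Set (G ⧸ Φ))) ≤ Mb := by
        intro h
        apply hMb.1
        rw [← top_le_iff, ← hfr]
        exact sup_le h le_rfl
      rcases eq_top_or_exists_le_coatom (normalizer (S' : Set (G ⧸ Φ))) with h | ⟨T, hT, hle⟩
      · exact hNr h
      · have hTne : T ≠ Mb := fun e => hNrM (e ▸ hle)
        have : S' ≤ T ⊓ Mb := le_inf (le_normalizer.trans hle) hS'le
        rw [hWM T hT hTne] at this
        exact hS'bot (le_bot_iff.mp this)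
  obtain ⟨q, hqp, hqMb⟩ := hq
  haveI : Fact q.Prime := ⟨hqp⟩
  -- solvability
  have hMbsolv : IsSolvable Mb := by
    haveI := hqMb.isNilpotent
    exact (inferInstance : Group.IsSolvable Mb)
  have hQMbsolv : IsSolvable ((G ⧸ Φ) ⧸ Mb) := by
    obtain ⟨x, -, hx⟩ := SetLike.not_le_iff_exists.mp
      (fun h => hMb.1 (top_le_iff.mp h))
    set xb : (G ⧸ Φ) ⧸ Mb := QuotientGroup.mk x with hxbdef
    have hzp : zpowers xb = ⊤ := by
      have h1 : Mb ≤ comap (QuotientGroup.mk' Mb) (zpowers xb) := by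
        intro y hy
        rw [mem_comap]
        have : (QuotientGroup.mk' Mb) y = 1 := (QuotientGroup.eq_one_iff y).mpr hy
        rw [this]
        exact one_mem _
      have hmemx : x ∈ comap (QuotientGroup.mk' Mb) (zpowers xb) := by
        rw [mem_comap]
        exact mem_zpowers xb
      have h2 : comap (QuotientGroup.mk' Mb) (zpowers xb) = ⊤ := by
        apply hMb.2
        exact lt_of_le_of_ne h1 (fun e => hx (by rw [e]; exact hmemx))
      calc zpowers xb
          = map (QuotientGroup.mk' Mb) (comap (QuotientGroup.mk' Mb) (zpowers xb)) :=
            (map_comap_eq_self_of_surjective (QuotientGroup.mk'_surjective Mb) _).symm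
        _ = ⊤ := by rw [h2]; exact Subgroup.map_top_of_surjective _ (QuotientGroup.mk'_surjective Mb)
    apply isSolvable_of_comm
    intro a b
    have ha : a ∈ zpowers xb := by rw [hzp]; trivial
    have hb : b ∈ zpowers xb := by rw [hzp]; trivial
    obtain ⟨i, rfl⟩ := ha
    obtain ⟨j, rfl⟩ := hb
    exact zpow_mul_comm xb i j
  have hQsolv : IsSolvable (G ⧸ Φ) := by
    haveI : Group.IsSolvable Mb := hMbsolv
    haveI : Group.IsSolvable ((G ⧸ Φ) ⧸ Mb) := hQMbsolv
    exact solvable_of_ker_le_range Mb.subtype (QuotientGroup.mk' Mb)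
      (by rw [QuotientGroup.ker_mk', range_subtype])
  have hGsolv : IsSolvable G := by
    haveI : Group.IsNilpotent Φ := frattini_nilpotent
    haveI : Group.IsSolvable Φ := inferInstance
    haveI : Group.IsSolvable (G ⧸ Φ) := hQsolv
    exact solvable_of_ker_le_range Φ.subtype π (by rw [hker, range_subtype])
  refine ⟨hGsolv, ?_⟩
  -- two conjugacy classes of maximal subgroups
  intro huniq
  -- cardinality of maximal subgroups other than Mb
  have hcard : ∀ W : Subgroup (G ⧸ Φ), IsCoatom W → W ≠ Mb →
      Nat.card W = Mb.index ∧ (Nat.card W).Prime := by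
    intro W hW hWne
    have hWnotle : ¬ W ≤ Mb := by
      intro h
      rcases h.lt_or_eq with h' | h'
      · exact hMb.1 (hW.2 _ h')
      · exact hWne h'
    obtain ⟨x, hxW, hxMb⟩ := SetLike.not_le_iff_exists.mp hWnotle
    have hWx : W = zpowers x := hgen W hW x hxW hxMb
    have hx1 : x ≠ 1 := fun e => hxMb (e ▸ one_mem Mb)
    have hcx : Nat.card W = orderOf x := by rw [hWx, Nat.card_zpowers]
    -- prime order
    have hprime : (orderOf x).Prime := by
      set n := orderOf x with hndef
      have hn0 : n ≠ 0 := (orderOf_pos x).ne'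
      have hn1 : n ≠ 1 := fun e => hx1 (orderOf_eq_one_iff.mp e)
      set r := n.minFac with hrdef
      have hrp : r.Prime := Nat.minFac_prime hn1
      have hrdvd : r ∣ n := Nat.minFac_dvd n
      set y := x ^ (n / r) with hydef
      have hyo : orderOf y = r := by
        rw [hydef, orderOf_pow, ← hndef, Nat.gcd_eq_right (Nat.div_dvd_of_dvd hrdvd),
          Nat.div_div_self hrdvd hn0]
      have hy1 : y ≠ 1 := by
        intro e
        rw [e, orderOf_one] at hyo
        exact hrp.one_lt.ne (by omega)
      have hyW : y ∈ W := by
        rw [hWx]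
        exact pow_mem (mem_zpowers x) _
      have hyMb : y ∉ Mb := by
        intro h
        have : y ∈ W ⊓ Mb := ⟨hyW, h⟩
        rw [hWM W hW hWne, Subgroup.mem_bot] at this
        exact hy1 this
      have hWy : W = zpowers y := hgen W hW y hyW hyMb
      have heq : orderOf y = orderOf x := by
        calc orderOf y = Nat.card (zpowers y) := (Nat.card_zpowers y).symm
          _ = Nat.card W := by rw [← hWy]
          _ = Nat.card (zpowers x) := by rw [← hWx]
          _ = orderOf x := Nat.card_zpowers x
      rw [hndef, ← heq, hyo]
      exact hrp
    -- card = index Mb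
    have hWsup : W ⊔ Mb = ⊤ := by
      apply hMb.2
      refine lt_of_le_of_ne le_sup_right ?_
      intro e
      apply hxMb
      rw [e]
      exact SetLike.le_def.mp le_sup_left hxW
    set φ : W →* (G ⧸ Φ) ⧸ Mb := (QuotientGroup.mk' Mb).comp W.subtype with hφdef
    have hinj : Function.Injective φ := by
      rw [← MonoidHom.ker_eq_bot_iff]
      ext ⟨w, hw⟩
      simp only [MonoidHom.mem_ker, hφdef, MonoidHom.comp_apply, Subgroup.coe_subtype,
        Subgroup.mem_bot]
      rw [QuotientGroup.mk'_apply, QuotientGroup.eq_one_iff]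
      constructor
      · intro h
        have : w ∈ W ⊓ Mb := ⟨hw, h⟩
        rw [hWM W hW hWne, Subgroup.mem_bot] at this
        exact Subtype.ext this
      · intro h
        rw [Subtype.ext_iff] at h
        simp only [Subgroup.coe_one] at h
        rw [h]
        exact one_mem Mb
    have hsurj : Function.Surjective φ := by
      intro z
      obtain ⟨y, rfl⟩ := QuotientGroup.mk'_surjective Mb z
      have hy2 : y ∈ (↑(W ⊔ Mb) : Set (G ⧸ Φ)) := by rw [hWsup]; trivial
      rw [Subgroup.mul_normal] at hy2
      obtain ⟨w, hw, m', hm', rfl⟩ := hy2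
      refine ⟨⟨w, hw⟩, ?_⟩
      have h5 : (QuotientGroup.mk' Mb) m' = 1 := (QuotientGroup.eq_one_iff m').mpr hm'
      simp only [hφdef, MonoidHom.comp_apply, Subgroup.coe_subtype]
      rw [map_mul, h5, mul_one]
    have hbij : Nat.card W = Nat.card ((G ⧸ Φ) ⧸ Mb) :=
      Nat.card_eq_of_bijective φ ⟨hinj, hsurj⟩
    rw [Subgroup.index_eq_card]
    exact ⟨hbij, by rw [hcx]; exact hprime⟩
  -- W₀ is not normal
  have hW₀nn : ¬ W₀.Normal := by
    intro h
    have hK₀n : K₀.Normal := by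
      have e : W₀.comap π = K₀ := comap_map_eq_self (hkerK _ hK₀)
      rw [← e]
      exact h.comap π
    exact hK₀ne (huniq K₀ hK₀ hK₀n)
  obtain ⟨hc₀, hp₀⟩ := hcard W₀ hW₀ hW₀ne
  set p := Nat.card W₀ with hpdef
  haveI : Fact p.Prime := ⟨hp₀⟩
  obtain ⟨k, hk⟩ := (IsPGroup.iff_card (p := q) (G := Mb)).mp hqMb
  -- p ≠ q
  have hpq : p ≠ q := by
    intro e
    have hQcard : Nat.card (G ⧸ Φ) = q ^ (k + 1) := by
      rw [← Subgroup.card_mul_index Mb, hk, ← hc₀, e, pow_succ]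
    have hQp : IsPGroup q (G ⧸ Φ) := by
      rw [IsPGroup.iff_card]
      exact ⟨k + 1, hQcard⟩
    haveI := hQp.isNilpotent
    exact hW₀nn (NormalizerCondition.normal_of_coatom W₀ normalizerCondition_of_isNilpotent hW₀)
  have hqk : k ≠ 0 := by
    intro e
    rw [e, pow_zero] at hk
    haveI : Nontrivial Mb := (Subgroup.nontrivial_iff_ne_bot Mb).mpr hMb_ne_bot
    have := Finite.one_lt_card (α := Mb)
    omega
  have hqdvdQ : q ∣ Nat.card (G ⧸ Φ) := by
    refine dvd_trans ?_ (Subgroup.card_subgroup_dvd_card Mb)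
    rw [hk]
    exact dvd_pow_self q hqk
  -- every coatom other than Mb is a Sylow p-subgroup
  have hsylow_eq : ∀ W : Subgroup (G ⧸ Φ), IsCoatom W → W ≠ Mb →
      ∀ P : Sylow p (G ⧸ Φ), W ≤ (P : Subgroup (G ⧸ Φ)) → (P : Subgroup (G ⧸ Φ)) = W := by
    intro W hW hWne P hle
    rcases hle.lt_or_eq with h | h
    · exfalso
      have hPtop : (P : Subgroup (G ⧸ Φ)) = ⊤ := hW.2 _ h
      have hQp : IsPGroup p (G ⧸ Φ) := by
        have h2 := P.2
        rw [hPtop] at h2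
        obtain ⟨k', hk'⟩ := (IsPGroup.iff_card (p := p)).mp h2
        rw [IsPGroup.iff_card]
        refine ⟨k', ?_⟩
        rw [← hk']
        exact (Nat.card_congr Subgroup.topEquiv.toEquiv).symm
      obtain ⟨k', hk'⟩ := (IsPGroup.iff_card (p := p)).mp hQp
      rw [hk'] at hqdvdQ
      have : q = p := by
        have := hqp.dvd_of_dvd_pow hqdvdQ
        exact (Nat.prime_dvd_prime_iff_eq hqp hp₀).mp this
      exact hpq this.symm
    · exact h.symm
  refine ⟨K₀, M, hK₀, hM, ?_, ?_⟩
  · intro g hgK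
    apply hK₀ne
    have h6 : K₀ = conjSub g⁻¹ (conjSub g K₀) := by
      rw [conjSub_conjSub, inv_mul_cancel, conjSub_one]
    rw [h6, hgK, conjSub_of_normal hMn]
  -- the target maximal subgroup T
  intro T hT
  by_cases hTM : T = M
  · right
    exact ⟨1, by rw [conjSub_one, hTM]⟩
  · left
    set Wt : Subgroup (G ⧸ Φ) := T.map π with hWtdef
    have hWt : IsCoatom Wt := isCoatom_map_of hπ (hkerK _ hT) hT
    have hWtne : Wt ≠ Mb := by
      intro e
      apply hTM
      rw [← comap_map_eq_self (hkerK _ hT), ← hWtdef, e, hcomapMb]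
    have hWt_p : IsPGroup p Wt := by
      rw [IsPGroup.iff_card]
      exact ⟨1, by rw [(hcard Wt hWt hWtne).1, ← hc₀, pow_one]⟩
    have hW₀_p : IsPGroup p W₀ := by
      rw [IsPGroup.iff_card]
      exact ⟨1, by rw [pow_one]⟩
    obtain ⟨Pt, hPt⟩ := hWt_p.exists_le_sylow
    obtain ⟨P₀, hP₀⟩ := hW₀_p.exists_le_sylow
    have h1 : (Pt : Subgroup (G ⧸ Φ)) = Wt := hsylow_eq Wt hWt hWtne Pt hPt
    have h2 : (P₀ : Subgroup (G ⧸ Φ)) = W₀ := hsylow_eq W₀ hW₀ hW₀ne P₀ hP₀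
    obtain ⟨g, hg⟩ := MulAction.exists_smul_eq (G ⧸ Φ) P₀ Pt
    have h3 : conjSub g W₀ = Wt := by
      rw [← h1, ← h2, ← hg]
      have h4 : ((g • P₀ : Sylow p (G ⧸ Φ)) : Subgroup (G ⧸ Φ)) =
          MulAut.conj g • (P₀ : Subgroup (G ⧸ Φ)) := by
        rw [Sylow.smul_def, Sylow.pointwise_smul_def]
      rw [h4]
      ext y
      rw [mem_conjSub, Subgroup.mem_pointwise_smul_iff_inv_smul_mem]
      have : (MulAut.conj g)⁻¹ • y = g⁻¹ * y * g := by
        rw [← map_inv]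
        show MulAut.conj g⁻¹ y = _
        rw [MulAut.conj_apply, inv_inv]
      rw [this]
    obtain ⟨g', hg'⟩ := hπ g
    refine ⟨g', ?_⟩
    have hmapconj : (conjSub g' K₀).map π = conjSub g W₀ := by
      show (Subgroup.map (MulAut.conj g').toMonoidHom K₀).map π =
        Subgroup.map (MulAut.conj g).toMonoidHom (K₀.map π)
      rw [Subgroup.map_map, Subgroup.map_map]
      congr 1
      ext y
      simp only [MonoidHom.comp_apply, MulEquiv.coe_toMonoidHom, MulAut.conj_apply]
      rw [← hg']
      simp [map_mul]
    have hΦle : π.ker ≤ conjSub g' K₀ := by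
      rw [hker]
      have e : conjSub g' Φ = Φ := conjSub_of_normal inferInstance g'
      rw [← e]
      exact conjSub_mono g' (frattini_le_coatom hK₀)
    have e1 : (T.map π).comap π = T := comap_map_eq_self (hkerK _ hT)
    have e2 : ((conjSub g' K₀).map π).comap π = conjSub g' K₀ := comap_map_eq_self hΦle
    rw [← e1, ← e2, hmapconj, h3, hWtdef]

end Finite


/-- Lemma 3.1 / `lem:twoconjclass`. -/
theorem statement_7 (hfg : Group.FG G) (hnc : ¬ IsCyclic G)
    {M : Subgroup G} (hM : IsCoatom M) (hMn : M.Normal)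
    (hint : ∀ K L : Subgroup G, IsCoatom K → IsCoatom L → K ≠ M → L ≠ M →
      K ⊓ M = L ⊓ M) :
    (∀ K L : Subgroup G, IsCoatom K → IsCoatom L → K ≠ M → L ≠ M → K ≠ L →
      K ⊓ M = K ⊓ L ∧ K ⊓ M = frattini G) ∧
    (Finite G → IsSolvable G ∧
      ((∀ T : Subgroup G, IsCoatom T → T.Normal → T = M) → TwoMaxClasses G)) := by
  constructor
  · intro K L hK hL hKM hLM hKL
    exact partA hM hMn hint hK hL hKM hLM hKL
  · intro hfin
    haveI : Finite G := hfin
    exact finite_part hnc hM hMn hint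


end NC
end

section
/- Let G be a group containing a normal, non-abelian maximal subgroup M with Z(G) properly contained in Z(M), and let z ∈ Z(M) \ Z(G). Then the set of neighbours of z in the non-commuting, non-generating graph nc(G) is exactly G \ M. -/
open Subgroup

namespace NC

variable {G : Type*} [Group G]

lemma centerOf_normal_s10 {M : Subgroup G} (hMn : M.Normal) : (centerOf M).Normal := by
  constructor
  intro n hn g
  obtain ⟨hnM, hnC⟩ := Subgroup.mem_inf.mp hn
  refine Subgroup.mem_inf.mpr ⟨hMn.conj_mem n hnM g, ?_⟩
  rw [Subgroup.mem_centralizer_iff]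
  intro m hm
  have hm' : g⁻¹ * m * g ∈ M := by
    have := hMn.conj_mem m hm g⁻¹
    simpa using this
  have h := Subgroup.mem_centralizer_iff.mp hnC (g⁻¹ * m * g) hm'
  have h2 : g * ((g⁻¹ * m * g) * n) * g⁻¹ = g * (n * (g⁻¹ * m * g)) * g⁻¹ := by rw [h]
  calc m * (g * n * g⁻¹) = g * ((g⁻¹ * m * g) * n) * g⁻¹ := by group
    _ = g * (n * (g⁻¹ * m * g)) * g⁻¹ := h2
    _ = (g * n * g⁻¹) * m := by group

open Pointwise in
/-- Lemma 4.2 / `lem:zneighbs`. -/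
theorem statement_10 {M : Subgroup G} (hM : IsCoatom M) (hMn : M.Normal)
    (hMna : ∃ a ∈ M, ∃ b ∈ M, a * b ≠ b * a)
    (hZ : Subgroup.center G < centerOf M)
    {z : G} (hz : z ∈ centerOf M) (hzZ : z ∉ Subgroup.center G) :
    ∀ g : G, (ncGraph G).Adj z g ↔ g ∉ M := by
  obtain ⟨hzM, hzC⟩ := Subgroup.mem_inf.mp hz
  intro g
  constructor
  · rintro ⟨hne, -⟩ hgM
    exact hne (Subgroup.mem_centralizer_iff.mp hzC g hgM).symm
  · intro hgM
    constructor
    · -- z and g do not commute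
      intro hcomm
      have hMC : M ≤ Subgroup.centralizer {z} := by
        intro m hm
        rw [Subgroup.mem_centralizer_iff]
        intro s hs
        rcases hs with rfl
        exact (Subgroup.mem_centralizer_iff.mp hzC m hm).symm
      have hgC : g ∈ Subgroup.centralizer {z} := by
        rw [Subgroup.mem_centralizer_iff]
        intro s hs
        rcases hs with rfl
        exact hcomm
      have hlt : M < Subgroup.centralizer {z} := lt_of_le_of_ne hMC (by
        intro h; rw [← h] at hgC; exact hgM hgC)
      have htop := hM.2 _ hlt
      apply hzZ
      rw [Subgroup.mem_center_iff]
      intro x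
      have hx : x ∈ Subgroup.centralizer {z} := htop ▸ Subgroup.mem_top x
      exact (Subgroup.mem_centralizer_iff.mp hx z rfl).symm
    · -- ⟨z, g⟩ ≠ ⊤
      intro htop
      haveI := centerOf_normal_s10 (G := G) (M := M) hMn
      have hNtop : centerOf M ⊔ Subgroup.zpowers g = ⊤ := by
        refine top_le_iff.mp ?_
        rw [← htop]
        refine (Subgroup.closure_le _).mpr ?_
        rintro x (rfl | hx)
        · exact Subgroup.mem_sup_left hz
        · rw [Set.mem_singleton_iff] at hx
          rw [hx]
          exact Subgroup.mem_sup_right (Subgroup.mem_zpowers g)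
      obtain ⟨a, ha, b, hb, hab⟩ := hMna
      have hmul : (↑(centerOf M ⊔ Subgroup.zpowers g) : Set G)
          = (centerOf M : Set G) * (Subgroup.zpowers g : Set G) :=
        Subgroup.normal_mul _ _
      have ha' : a ∈ (centerOf M : Set G) * (Subgroup.zpowers g : Set G) := by
        rw [← hmul]; rw [hNtop]; exact Subgroup.mem_top a
      have hb' : b ∈ (centerOf M : Set G) * (Subgroup.zpowers g : Set G) := by
        rw [← hmul]; rw [hNtop]; exact Subgroup.mem_top b
      obtain ⟨c, hc, y, hy, hcy⟩ := ha'
      obtain ⟨d, hd, w, hw, hdw⟩ := hb'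
      obtain ⟨hcM, hcC⟩ := Subgroup.mem_inf.mp hc
      obtain ⟨hdM, hdC⟩ := Subgroup.mem_inf.mp hd
      have hyM : y ∈ M := by
        have : y = c⁻¹ * a := by rw [← hcy]; group
        rw [this]; exact M.mul_mem (M.inv_mem hcM) ha
      have hwM : w ∈ M := by
        have : w = d⁻¹ * b := by rw [← hdw]; group
        rw [this]; exact M.mul_mem (M.inv_mem hdM) hb
      -- commuting facts
      have hcd : d * c = c * d := Subgroup.mem_centralizer_iff.mp hcC d hdM
      have hyd : y * d = d * y := Subgroup.mem_centralizer_iff.mp hdC y hyM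
      have hcw : w * c = c * w := Subgroup.mem_centralizer_iff.mp hcC w hwM
      have hyw : y * w = w * y := by
        obtain ⟨n, rfl⟩ := Subgroup.mem_zpowers_iff.mp hy
        obtain ⟨k, rfl⟩ := Subgroup.mem_zpowers_iff.mp hw
        rw [← zpow_add, ← zpow_add, add_comm]
      apply hab
      rw [← hcy, ← hdw]
      calc (c * y) * (d * w) = c * (y * d) * w := by group
        _ = c * (d * y) * w := by rw [hyd]
        _ = (c * d) * (y * w) := by group
        _ = (d * c) * (w * y) := by rw [hcd, hyw]
        _ = d * (c * w) * y := by group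
        _ = d * (w * c) * y := by rw [hcw]
        _ = (d * w) * (c * y) := by group

end NC
end
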